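/- If no proxy's true position equals the unweighted median med of the full population and there exist proxies j, j' with p_j < med < p_{j'}, then some proxy has a manipulation: in particular, the proxy on the opposite side of med from the truthful winner can deviate to report med, changing the outcome to med, which is strictly closer to its peak than the truthful outcome. -/
import Mathlib


/-- `x` is a median of the multiset `P`. -/
def IsMedian (P : Multiset ℝ) (x : ℝ) : Prop :=
  x ∈ P ∧ 2 * (P.filter (fun y => y < x)).card ≤ P.card ∧
    2 * (P.filter (fun y => x < y)).card ≤ P.card

/-- The combined multiset of positions of proxies and followers. -/
def combined {m n : ℕ} (s : Fin m → ℝ) (p : Fin n → ℝ) : Multiset ℝ :=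
  Finset.univ.val.map s + Finset.univ.val.map p

lemma median_after_update {m n : ℕ} (pM : Fin m → ℝ) (pN : Fin n → ℝ) (med : ℝ)
    (hmed : IsMedian (combined pM pN) med) (j : Fin m) :
    IsMedian (combined (Function.update pM j med) pN) med := by
  obtain ⟨-, h1, h2⟩ := hmed
  have hmem : j ∈ (Finset.univ : Finset (Fin m)).val := Finset.mem_univ_val j
  set T : Multiset ℝ := ((Finset.univ : Finset (Fin m)).val.erase j).map pM with hT
  have e1 : (Finset.univ : Finset (Fin m)).val.map pM = pM j ::ₘ T := by
    conv_lhs => rw [← Multiset.cons_erase hmem]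
    rw [Multiset.map_cons]
  have e2 : (Finset.univ : Finset (Fin m)).val.map (Function.update pM j med)
      = med ::ₘ T := by
    conv_lhs => rw [← Multiset.cons_erase hmem]
    rw [Multiset.map_cons, Function.update_self]
    congr 1
    apply Multiset.map_congr rfl
    intro y hy
    have hnd : ((Finset.univ : Finset (Fin m)).val).Nodup := Finset.univ.nodup
    have : y ≠ j := ((Multiset.Nodup.mem_erase_iff hnd).mp hy).1
    exact Function.update_of_ne this _ _
  set F : Multiset ℝ := (Finset.univ : Finset (Fin n)).val.map pN with hF
  have hQ : combined pM pN = pM j ::ₘ T + F := by rw [combined, e1]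
  have hQ' : combined (Function.update pM j med) pN = med ::ₘ T + F := by
    rw [combined, e2]
  rw [hQ] at h1 h2
  rw [hQ']
  refine ⟨?_, ?_, ?_⟩
  · simp
  · have : ((med ::ₘ T + F).filter (fun y => y < med)).card ≤
        ((pM j ::ₘ T + F).filter (fun y => y < med)).card := by
      rw [Multiset.cons_add, Multiset.cons_add, Multiset.filter_cons,
        Multiset.filter_cons]
      rcases lt_or_ge (pM j) med with h | h
      · simp [h, lt_irrefl]
      · simp [not_lt.mpr h, lt_irrefl]
    calc 2 * ((med ::ₘ T + F).filter (fun y => y < med)).card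
        ≤ 2 * ((pM j ::ₘ T + F).filter (fun y => y < med)).card := by omega
      _ ≤ (pM j ::ₘ T + F).card := h1
      _ = (med ::ₘ T + F).card := by simp
  · have : ((med ::ₘ T + F).filter (fun y => med < y)).card ≤
        ((pM j ::ₘ T + F).filter (fun y => med < y)).card := by
      rw [Multiset.cons_add, Multiset.cons_add, Multiset.filter_cons,
        Multiset.filter_cons]
      rcases lt_or_ge med (pM j) with h | h
      · simp [h, lt_irrefl]
      · simp [not_lt.mpr h, lt_irrefl]
    calc 2 * ((med ::ₘ T + F).filter (fun y => med < y)).card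
        ≤ 2 * ((pM j ::ₘ T + F).filter (fun y => med < y)).card := by omega
      _ ≤ (pM j ::ₘ T + F).card := h2
      _ = (med ::ₘ T + F).card := by simp

/-- If no proxy sits at the unweighted median `med` of the full population and
there are proxies strictly on both sides of `med`, then some proxy has a
manipulation: deviating to report `med` keeps the combined median at `med`,
so the new outcome is `med` (the position closest to the median), which is
strictly closer to the deviator's peak than the truthful outcome `pM j0`. -/
theorem manipulation_exists_of_proxies_on_both_sides {m n : ℕ} (hodd : Odd (m + n))
    (pM : Fin m → ℝ) (pN : Fin n → ℝ) (med : ℝ)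
    (hmed : IsMedian (combined pM pN) med)
    (hne : ∀ k, pM k ≠ med)
    (hboth : ∃ j j', pM j < med ∧ med < pM j')
    (j0 : Fin m) (hj0 : ∀ k ≠ j0, |pM j0 - med| < |pM k - med|) :
    ∃ j, IsMedian (combined (Function.update pM j med) pN) med ∧
      |med - pM j| < |pM j0 - pM j| := by
  obtain ⟨jl, jr, hl, hr⟩ := hboth
  rcases lt_or_gt_of_ne (hne j0) with h0 | h0
  · refine ⟨jr, median_after_update pM pN med hmed jr, ?_⟩
    rw [abs_of_neg (by linarith), abs_of_neg (by linarith)]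
    linarith
  · refine ⟨jl, median_after_update pM pN med hmed jl, ?_⟩
    rw [abs_of_pos (by linarith), abs_of_pos (by linarith)]
    linarith
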